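/- Let K be an algebraically closed field of characteristic 0 and f ∈ K[x₁,...,xₙ] irreducible and square-free with n ≥ 2. Let W ⊆ 𝔸ⁿ be a closed irreducible subset of codimension r ≥ 2. Then the multiplicity of the hypersurface V(f) at a general point of W is at most r − 1; equivalently, there exists a multi-index α with |α| ≤ r − 1 such that the partial derivative ∂^α f/∂x^α does not vanish identically on W. -/

import Mathlib

open MvPolynomial

def MvSquareFree {K : Type*} [CommSemiring K] {n : ℕ} (f : MvPolynomial (Fin n) K) : Prop :=
  ∀ i : Fin n, f.degreeOf i ≤ 1

/-- The iterated partial derivative `∂^α f / ∂x^α` for a multi-index `α`. -/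
noncomputable def iterPDeriv {K : Type*} [CommSemiring K] {n : ℕ} (α : Fin n → ℕ)
    (f : MvPolynomial (Fin n) K) : MvPolynomial (Fin n) K :=
  (List.finRange n).foldr (fun i g => (fun p => MvPolynomial.pderiv i p)^[α i] g) f

noncomputable def sderiv {K : Type*} [CommSemiring K] {n : ℕ} (α : Fin n → ℕ)
    (f : MvPolynomial (Fin (n+1)) K) : MvPolynomial (Fin (n+1)) K :=
  (List.finRange n).foldr (fun i g => (fun p => MvPolynomial.pderiv i.succ p)^[α i] g) f

section helpers
variable {K : Type*} [Field K] {n : ℕ}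

lemma iterPDeriv_zero (f : MvPolynomial (Fin n) K) : iterPDeriv (fun _ => 0) f = f := by
  unfold iterPDeriv
  induction List.finRange n with
  | nil => rfl
  | cons a l ih => simp [ih]

lemma iterPDeriv_cons (k : ℕ) (α : Fin n → ℕ) (f : MvPolynomial (Fin (n+1)) K) :
    iterPDeriv (Fin.cons k α) f = (fun p => MvPolynomial.pderiv 0 p)^[k] (sderiv α f) := by
  simp only [iterPDeriv, sderiv, List.finRange_succ, List.foldr_cons, List.foldr_map,
    Fin.cons_succ, Fin.cons_zero]

lemma coeff_finSuccEquiv_pderiv_succ (i : Fin n) (f : MvPolynomial (Fin (n+1)) K) (k : ℕ) :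
    (finSuccEquiv K n (pderiv i.succ f)).coeff k = pderiv i ((finSuccEquiv K n f).coeff k) := by
  induction f using MvPolynomial.induction_on generalizing k with
  | C a =>
      have h : finSuccEquiv K n (C a) = Polynomial.C (C a) := by
        simp [finSuccEquiv_apply]
      simp [h, pderiv_C, Polynomial.coeff_C, apply_ite (pderiv i)]
  | add f g hf hg => simp [map_add, hf, hg]
  | mul_X f j hf =>
      rw [pderiv_mul]
      cases j using Fin.cases with
      | zero =>
          rw [pderiv_X_of_ne (Fin.succ_ne_zero i).symm, mul_zero, add_zero, map_mul,
            finSuccEquiv_X_zero, map_mul, finSuccEquiv_X_zero]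
          cases k with
          | zero => simp
          | succ k => simp [Polynomial.coeff_mul_X, hf]
      | succ j' =>
          by_cases hij : i = j'
          · subst hij
            rw [pderiv_X_self, mul_one, map_add, map_mul, finSuccEquiv_X_succ, map_mul,
              finSuccEquiv_X_succ]
            simp [Polynomial.coeff_mul_C, hf, pderiv_mul]
            ring
          · rw [pderiv_X_of_ne (by simpa [Fin.succ_inj] using (Ne.symm hij)), mul_zero, add_zero,
              map_mul, finSuccEquiv_X_succ, map_mul, finSuccEquiv_X_succ]
            simp [Polynomial.coeff_mul_C, hf, pderiv_mul, pderiv_X_of_ne (Ne.symm hij)]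
            ring

end helpers

section helpers2
variable {K : Type*} [Field K] {n : ℕ}

lemma coeff_finSuccEquiv_pderiv_succ_iter (i : Fin n) (m : ℕ) (f : MvPolynomial (Fin (n+1)) K)
    (k : ℕ) : (finSuccEquiv K n ((fun p => pderiv i.succ p)^[m] f)).coeff k
      = (fun p => pderiv i p)^[m] ((finSuccEquiv K n f).coeff k) := by
  induction m generalizing f with
  | zero => simp
  | succ m ih =>
      rw [Function.iterate_succ_apply, Function.iterate_succ_apply, ih,
        coeff_finSuccEquiv_pderiv_succ]

lemma coeff_finSuccEquiv_sderiv (α : Fin n → ℕ) (f : MvPolynomial (Fin (n+1)) K) (k : ℕ) :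
    (finSuccEquiv K n (sderiv α f)).coeff k = iterPDeriv α ((finSuccEquiv K n f).coeff k) := by
  unfold sderiv iterPDeriv
  induction List.finRange n generalizing f with
  | nil => simp
  | cons a l ih =>
      simp only [List.foldr_cons]
      rw [coeff_finSuccEquiv_pderiv_succ_iter, ih]

lemma finSuccEquiv_pderiv_zero (f : MvPolynomial (Fin (n+1)) K) :
    finSuccEquiv K n (pderiv 0 f) = Polynomial.derivative (finSuccEquiv K n f) := by
  induction f using MvPolynomial.induction_on with
  | C a =>
      have h : finSuccEquiv K n (C a) = Polynomial.C (C a) := by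
        simp [finSuccEquiv_apply]
      simp [h, pderiv_C]
  | add f g hf hg => simp [map_add, hf, hg]
  | mul_X f j hf =>
      rw [pderiv_mul]
      cases j using Fin.cases with
      | zero =>
          rw [pderiv_X_self, mul_one, map_add, map_mul, finSuccEquiv_X_zero, map_mul,
            finSuccEquiv_X_zero, hf, Polynomial.derivative_mul, Polynomial.derivative_X, mul_one]
      | succ j' =>
          rw [pderiv_X_of_ne (Fin.succ_ne_zero j'), mul_zero, add_zero, map_mul,
            finSuccEquiv_X_succ, map_mul, finSuccEquiv_X_succ, hf, Polynomial.derivative_mul,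
            Polynomial.derivative_C, mul_zero, add_zero]

lemma finSuccEquiv_pderiv_zero_eq_C {g : MvPolynomial (Fin (n+1)) K}
    (h2 : ∀ k, 2 ≤ k → (finSuccEquiv K n g).coeff k = 0) :
    finSuccEquiv K n (pderiv 0 g) = Polynomial.C ((finSuccEquiv K n g).coeff 1) := by
  rw [finSuccEquiv_pderiv_zero]
  ext k
  rw [Polynomial.coeff_derivative]
  cases k with
  | zero => simp
  | succ k =>
      rw [h2 (k+2) (by omega), Polynomial.coeff_C]
      simp

end helpers2

section helpers3
variable {K : Type*} [Field K] {n : ℕ}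

lemma iterPDeriv_zero_poly (α : Fin n → ℕ) : iterPDeriv α (0 : MvPolynomial (Fin n) K) = 0 := by
  unfold iterPDeriv
  induction List.finRange n with
  | nil => rfl
  | cons a l ih =>
      simp only [List.foldr_cons, ih]
      induction α a with
      | zero => simp
      | succ k ihk => rw [Function.iterate_succ_apply', ihk, map_zero]

lemma coeff_sq_zero {f : MvPolynomial (Fin (n+1)) K} (hf : MvSquareFree f) {k : ℕ} (hk : 2 ≤ k) :
    (finSuccEquiv K n f).coeff k = 0 :=
  Polynomial.coeff_eq_zero_of_natDegree_lt
    (by rw [natDegree_finSuccEquiv]; exact lt_of_le_of_lt (hf 0) hk)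

lemma eq_C_add_C_X {f : MvPolynomial (Fin (n+1)) K} (hf : MvSquareFree f) :
    finSuccEquiv K n f = Polynomial.C ((finSuccEquiv K n f).coeff 0)
      + Polynomial.C ((finSuccEquiv K n f).coeff 1) * Polynomial.X := by
  ext k
  match k with
  | 0 => simp
  | 1 => simp
  | (k+2) => simp [coeff_sq_zero hf (le_add_self : 2 ≤ k + 2), Polynomial.coeff_C,
      Polynomial.coeff_X]

lemma height_add_one_le_of_lt {β : Type*} [Preorder β] {x y : β} (h : x < y) :
    Order.height x + 1 ≤ Order.height y := by
  rw [Order.height_eq_iSup_lt_height y]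
  exact le_iSup₂_of_le x h le_rfl

noncomputable def specMap (K : Type*) [Field K] (n : ℕ) :
    PrimeSpectrum (MvPolynomial (Fin n) K) → PrimeSpectrum (MvPolynomial (Fin (n+1)) K) :=
  fun q => ⟨Ideal.comap (finSuccEquiv K n) (Ideal.map Polynomial.C q.asIdeal),
    Ideal.IsPrime.comap _ (hK := @Ideal.isPrime_map_C_of_isPrime _ _ _ q.isPrime)⟩

lemma specMap_strictMono : StrictMono (specMap K n) := by
  intro a b hab
  have hab' : a.asIdeal < b.asIdeal := hab
  have h1 : Ideal.map Polynomial.C a.asIdeal < Ideal.map Polynomial.C b.asIdeal := by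
    refine lt_of_le_of_ne (Ideal.map_mono hab'.le) ?_
    obtain ⟨x, hxb, hxa⟩ := SetLike.exists_of_lt hab'
    intro heq
    have hx : Polynomial.C x ∈ Ideal.map (Polynomial.C :
        MvPolynomial (Fin n) K →+* Polynomial (MvPolynomial (Fin n) K)) a.asIdeal := by
      rw [heq]; exact Ideal.mem_map_of_mem _ hxb
    rw [Ideal.mem_map_C_iff] at hx
    exact hxa (by simpa using hx 0)
  show (specMap K n a).asIdeal < (specMap K n b).asIdeal
  refine lt_of_le_not_ge (Ideal.comap_mono h1.le) ?_
  intro hle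
  obtain ⟨y, hyb, hya⟩ := SetLike.exists_of_lt h1
  have hmem' : ∀ (c : PrimeSpectrum (MvPolynomial (Fin n) K)) y,
      (finSuccEquiv K n).symm y ∈ (specMap K n c).asIdeal ↔
        y ∈ Ideal.map Polynomial.C c.asIdeal := by
    intro c y
    simp only [specMap, Ideal.mem_comap, AlgEquiv.apply_symm_apply]
  exact hya ((hmem' a y).mp (hle ((hmem' b y).mpr hyb)))

lemma base_q1 (L : List (MvPolynomial (Fin n) K)) (p : Ideal (MvPolynomial (Fin n) K))
    (hp : p.IsPrime) (hne : ∃ f ∈ L, f ≠ 0)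
    (hgcd : ∀ π : MvPolynomial (Fin n) K, Prime π → ∃ f ∈ L, ¬ π ∣ f)
    (hmem : ∀ f ∈ L, f ∈ p) :
    (2 : ℕ∞) ≤ Order.height (⟨p, hp⟩ : PrimeSpectrum (MvPolynomial (Fin n) K)) := by
  obtain ⟨f₀, hf₀L, hf₀⟩ := hne
  have hpbot : p ≠ ⊥ := by
    intro h
    exact hf₀ (by simpa [h] using hmem f₀ hf₀L)
  obtain ⟨π, hπp, hπ⟩ := hp.exists_mem_prime_of_ne_bot hpbot
  obtain ⟨fk, hfkL, hnd⟩ := hgcd π hπ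
  set x0 : PrimeSpectrum (MvPolynomial (Fin n) K) := ⟨⊥, Ideal.bot_prime⟩
  set x1 : PrimeSpectrum (MvPolynomial (Fin n) K) :=
    ⟨Ideal.span {π}, (Ideal.span_singleton_prime hπ.ne_zero).mpr hπ⟩
  have h01 : x0 < x1 := by
    show (⊥ : Ideal (MvPolynomial (Fin n) K)) < Ideal.span {π}
    refine lt_of_le_of_ne bot_le ?_
    intro h
    exact hπ.ne_zero (by simpa [Ideal.span_singleton_eq_bot] using h.symm)
  have h12 : x1 < (⟨p, hp⟩ : PrimeSpectrum (MvPolynomial (Fin n) K)) := by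
    show Ideal.span {π} < p
    refine lt_of_le_not_ge ((Ideal.span_singleton_le_iff_mem _).mpr hπp) ?_
    intro hle
    exact hnd ((Ideal.mem_span_singleton).mp (hle (hmem fk hfkL)))
  have A := height_add_one_le_of_lt h01
  have B := height_add_one_le_of_lt h12
  calc (2 : ℕ∞) = 0 + 1 + 1 := by norm_num
  _ ≤ Order.height x0 + 1 + 1 := by gcongr; exact zero_le
  _ ≤ Order.height x1 + 1 := by gcongr
  _ ≤ _ := B

end helpers3

section helpers4
variable {K : Type*} [Field K] {n : ℕ}
variable {p : Ideal (MvPolynomial (Fin (n+1)) K)}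

lemma finSuccEquiv_iterPDeriv_cons_zero {f : MvPolynomial (Fin (n+1)) K} (hf : MvSquareFree f)
    (α : Fin n → ℕ) :
    finSuccEquiv K n (iterPDeriv (Fin.cons 0 α) f)
      = Polynomial.C (iterPDeriv α ((finSuccEquiv K n f).coeff 0))
        + Polynomial.C (iterPDeriv α ((finSuccEquiv K n f).coeff 1)) * Polynomial.X := by
  rw [iterPDeriv_cons]
  simp only [Function.iterate_zero, id_eq]
  ext k
  match k with
  | 0 => simp [coeff_finSuccEquiv_sderiv]
  | 1 => simp [coeff_finSuccEquiv_sderiv]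
  | (k+2) =>
      simp [coeff_finSuccEquiv_sderiv, coeff_sq_zero hf (le_add_self : 2 ≤ k + 2),
        iterPDeriv_zero_poly, Polynomial.coeff_C, Polynomial.coeff_X]

lemma finSuccEquiv_iterPDeriv_cons_one {f : MvPolynomial (Fin (n+1)) K} (hf : MvSquareFree f)
    (α : Fin n → ℕ) :
    finSuccEquiv K n (iterPDeriv (Fin.cons 1 α) f)
      = Polynomial.C (iterPDeriv α ((finSuccEquiv K n f).coeff 1)) := by
  rw [iterPDeriv_cons]
  rw [Function.iterate_one]
  rw [finSuccEquiv_pderiv_zero_eq_C (g := sderiv α f) ?_]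
  · rw [coeff_finSuccEquiv_sderiv]
  · intro k hk
    rw [coeff_finSuccEquiv_sderiv, coeff_sq_zero hf hk, iterPDeriv_zero_poly]

/-- In case both the `cons 0` and `cons 1` derivatives are in `p`, both coefficient-derivatives
are in the contraction. -/
lemma mem_contraction_of_one_more (hp : p.IsPrime) {f : MvPolynomial (Fin (n+1)) K}
    (hf : MvSquareFree f) (α : Fin n → ℕ)
    (h0 : iterPDeriv (Fin.cons 0 α) f ∈ p) (h1 : iterPDeriv (Fin.cons 1 α) f ∈ p) :
    iterPDeriv α ((finSuccEquiv K n f).coeff 1) ∈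
        Ideal.comap Polynomial.C (Ideal.comap (finSuccEquiv K n).symm p) ∧
      iterPDeriv α ((finSuccEquiv K n f).coeff 0) ∈
        Ideal.comap Polynomial.C (Ideal.comap (finSuccEquiv K n).symm p) := by
  set P : Ideal (Polynomial (MvPolynomial (Fin n) K)) := Ideal.comap (finSuccEquiv K n).symm p
  have hmemP : ∀ g : MvPolynomial (Fin (n+1)) K, g ∈ p → finSuccEquiv K n g ∈ P := by
    intro g hg
    simp only [P, Ideal.mem_comap, AlgEquiv.symm_apply_apply]
    exact hg
  have hA : Polynomial.C (iterPDeriv α ((finSuccEquiv K n f).coeff 1)) ∈ P := by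
    rw [← finSuccEquiv_iterPDeriv_cons_one hf α]
    exact hmemP _ h1
  constructor
  · exact hA
  · have h0' := hmemP _ h0
    rw [finSuccEquiv_iterPDeriv_cons_zero hf α] at h0'
    have : Polynomial.C (iterPDeriv α ((finSuccEquiv K n f).coeff 0)) ∈ P := by
      have := P.sub_mem h0' (P.mul_mem_right Polynomial.X hA)
      simpa using this
    exact this

/-- In the case `P ≤ map C q'`, all coefficient-derivatives at the same order are in the
contraction. -/
lemma mem_contraction_of_le_mapC (hp : p.IsPrime) {f : MvPolynomial (Fin (n+1)) K}
    (hf : MvSquareFree f) (α : Fin n → ℕ)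
    (hPB : Ideal.comap (finSuccEquiv K n).symm p ≤
      Ideal.map Polynomial.C (Ideal.comap Polynomial.C (Ideal.comap (finSuccEquiv K n).symm p)))
    (h0 : iterPDeriv (Fin.cons 0 α) f ∈ p) :
    iterPDeriv α ((finSuccEquiv K n f).coeff 1) ∈
        Ideal.comap Polynomial.C (Ideal.comap (finSuccEquiv K n).symm p) ∧
      iterPDeriv α ((finSuccEquiv K n f).coeff 0) ∈
        Ideal.comap Polynomial.C (Ideal.comap (finSuccEquiv K n).symm p) := by
  set P : Ideal (Polynomial (MvPolynomial (Fin n) K)) := Ideal.comap (finSuccEquiv K n).symm p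
  have hmemP : finSuccEquiv K n (iterPDeriv (Fin.cons 0 α) f) ∈ P := by
    simp only [P, Ideal.mem_comap, AlgEquiv.symm_apply_apply]
    exact h0
  have := hPB hmemP
  rw [Ideal.mem_map_C_iff] at this
  have h1 := this 1
  have h0' := this 0
  rw [iterPDeriv_cons] at h1 h0'
  simp only [Function.iterate_zero, id_eq] at h1 h0'
  rw [coeff_finSuccEquiv_sderiv] at h1 h0'
  exact ⟨h1, h0'⟩

lemma prime_symm_C {π : MvPolynomial (Fin n) K} (hπ : Prime π) :
    Prime ((finSuccEquiv K n).symm (Polynomial.C π)) := by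
  have h1 : Prime (Polynomial.C π) := Polynomial.prime_C_iff.mpr hπ
  exact (MulEquiv.prime_iff ((finSuccEquiv K n).symm.toRingEquiv.toMulEquiv)).mpr h1

lemma dvd_of_dvd_coeffs {π : MvPolynomial (Fin n) K} {f : MvPolynomial (Fin (n+1)) K}
    (hf : MvSquareFree f) (h1 : π ∣ (finSuccEquiv K n f).coeff 1)
    (h0 : π ∣ (finSuccEquiv K n f).coeff 0) :
    (finSuccEquiv K n).symm (Polynomial.C π) ∣ f := by
  have : Polynomial.C π ∣ finSuccEquiv K n f := by
    rw [eq_C_add_C_X hf]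
    exact dvd_add (map_dvd Polynomial.C h0) (Dvd.dvd.mul_right (map_dvd Polynomial.C h1) _)
  have := map_dvd (finSuccEquiv K n).symm this
  rwa [AlgEquiv.symm_apply_apply] at this

end helpers4

lemma keyE {K : Type*} [Field K] : ∀ (n q : ℕ), 1 ≤ q →
    ∀ (L : List (MvPolynomial (Fin n) K)) (p : Ideal (MvPolynomial (Fin n) K)) (hp : p.IsPrime),
    (∀ f ∈ L, MvSquareFree f) → (∃ f ∈ L, f ≠ 0) →
    (∀ π : MvPolynomial (Fin n) K, Prime π → ∃ f ∈ L, ¬ π ∣ f) →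
    (∀ f ∈ L, ∀ α : Fin n → ℕ, (∑ i, α i) + 1 ≤ q → iterPDeriv α f ∈ p) →
    ((q : ℕ∞) + 1) ≤ Order.height (⟨p, hp⟩ : PrimeSpectrum (MvPolynomial (Fin n) K)) := by
  intro n
  induction n with
  | zero =>
      intro q hq L p hp hsq hne hgcd hder
      exfalso
      obtain ⟨f₀, hfL, hf0⟩ := hne
      have hf0p : f₀ ∈ p := by
        have := hder f₀ hfL (fun _ => 0) (by simpa using hq)
        rwa [iterPDeriv_zero] at this
      have hunit : IsUnit f₀ := by
        rw [MvPolynomial.eq_C_of_isEmpty f₀] at hf0 ⊢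
        exact (Ne.isUnit (by simpa using hf0)).map MvPolynomial.C
      exact hp.ne_top (p.eq_top_of_isUnit_mem hf0p hunit)
  | succ m IH =>
      intro q hq L p hp hsq hne hgcd hder
      have hmemp : ∀ f ∈ L, f ∈ p := by
        intro f hf
        have := hder f hf (fun _ => 0) (by simpa using hq)
        rwa [iterPDeriv_zero] at this
      rcases Nat.lt_or_ge q 2 with hq2 | hq2
      · have hq1 : q = 1 := by omega
        subst hq1
        simpa [one_add_one_eq_two] using base_q1 L p hp ⟨_, hne.choose_spec.1, hne.choose_spec.2⟩ hgcd hmemp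
      · obtain ⟨q'', rfl⟩ : ∃ q'', q = q'' + 1 := ⟨q - 1, by omega⟩
        have hq'' : 1 ≤ q'' := by omega
        set P : Ideal (Polynomial (MvPolynomial (Fin m) K)) :=
          Ideal.comap (finSuccEquiv K m).symm p with hPdef
        have hPprime : P.IsPrime := Ideal.IsPrime.comap _
        set q' : Ideal (MvPolynomial (Fin m) K) := Ideal.comap Polynomial.C P with hq'def
        have hq'prime : q'.IsPrime := Ideal.IsPrime.comap _
        set L' := (L.map fun f => (finSuccEquiv K m f).coeff 1)
          ++ (L.map fun f => (finSuccEquiv K m f).coeff 0) with hL'def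
        have hmemL' : ∀ g ∈ L', ∃ f ∈ L, g = (finSuccEquiv K m f).coeff 1 ∨
            g = (finSuccEquiv K m f).coeff 0 := by
          intro g hg
          simp only [hL'def, List.mem_append, List.mem_map] at hg
          rcases hg with ⟨f, hf, rfl⟩ | ⟨f, hf, rfl⟩
          · exact ⟨f, hf, Or.inl rfl⟩
          · exact ⟨f, hf, Or.inr rfl⟩
        have hsq' : ∀ g ∈ L', MvSquareFree g := by
          intro g hg
          obtain ⟨f, hfL, h | h⟩ := hmemL' g hg <;> subst h <;> intro j <;>
            exact le_trans (degreeOf_coeff_finSuccEquiv f j _) (hsq f hfL j.succ)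
        have hne' : ∃ g ∈ L', g ≠ 0 := by
          obtain ⟨f₀, hf₀L, hf₀⟩ := hne
          by_cases h1 : (finSuccEquiv K m f₀).coeff 1 = 0
          · refine ⟨(finSuccEquiv K m f₀).coeff 0, ?_, ?_⟩
            · simp only [hL'def, List.mem_append, List.mem_map]
              exact Or.inr ⟨f₀, hf₀L, rfl⟩
            · intro h0
              apply hf₀
              have : finSuccEquiv K m f₀ = 0 := by
                rw [eq_C_add_C_X (hsq f₀ hf₀L), h0, h1]; simp
              simpa using congrArg (finSuccEquiv K m).symm this
          · refine ⟨(finSuccEquiv K m f₀).coeff 1, ?_, h1⟩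
            simp only [hL'def, List.mem_append, List.mem_map]
            exact Or.inl ⟨f₀, hf₀L, rfl⟩
        have hgcd' : ∀ π : MvPolynomial (Fin m) K, Prime π → ∃ g ∈ L', ¬ π ∣ g := by
          intro π hπ
          by_contra hcon
          push_neg at hcon
          have hdvd : ∀ f ∈ L, (finSuccEquiv K m).symm (Polynomial.C π) ∣ f := by
            intro f hf
            refine dvd_of_dvd_coeffs (hsq f hf) ?_ ?_
            · apply hcon
              simp only [hL'def, List.mem_append, List.mem_map]
              exact Or.inl ⟨f, hf, rfl⟩
            · apply hcon
              simp only [hL'def, List.mem_append, List.mem_map]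
              exact Or.inr ⟨f, hf, rfl⟩
          obtain ⟨f, hfL, hnd⟩ := hgcd _ (prime_symm_C hπ)
          exact hnd (hdvd f hfL)
        by_cases hPB : P ≤ Ideal.map Polynomial.C q'
        · -- case B : the prime is the extension of its contraction
          have hderB : ∀ g ∈ L', ∀ α : Fin m → ℕ, (∑ i, α i) + 1 ≤ q'' + 1 →
              iterPDeriv α g ∈ q' := by
            intro g hg α hα
            obtain ⟨f, hfL, h | h⟩ := hmemL' g hg <;> subst h
            · exact (mem_contraction_of_le_mapC hp (hsq f hfL) α hPB
                (hder f hfL _ (by rw [Fin.sum_cons]; omega))).1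
            · exact (mem_contraction_of_le_mapC hp (hsq f hfL) α hPB
                (hder f hfL _ (by rw [Fin.sum_cons]; omega))).2
          have hIH := IH (q'' + 1) (by omega) L' q' hq'prime hsq' hne' hgcd' hderB
          have hPeq : Ideal.map Polynomial.C q' = P := le_antisymm Ideal.map_comap_le hPB
          have hspec : specMap K m ⟨q', hq'prime⟩ = ⟨p, hp⟩ := by
            apply PrimeSpectrum.ext
            show Ideal.comap (finSuccEquiv K m) (Ideal.map Polynomial.C q') = p
            rw [hPeq, hPdef]
            ext x
            simp [Ideal.mem_comap]
          calc ((q'' + 1 : ℕ) : ℕ∞) + 1 ≤ Order.height (⟨q', hq'prime⟩ :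
                PrimeSpectrum (MvPolynomial (Fin m) K)) := hIH
            _ ≤ Order.height (specMap K m ⟨q', hq'prime⟩) :=
                Order.height_le_height_apply_of_strictMono _ specMap_strictMono _
            _ = _ := by rw [hspec]
        · -- case A : the prime strictly contains the extension of its contraction
          have hderA : ∀ g ∈ L', ∀ α : Fin m → ℕ, (∑ i, α i) + 1 ≤ q'' →
              iterPDeriv α g ∈ q' := by
            intro g hg α hα
            obtain ⟨f, hfL, h | h⟩ := hmemL' g hg <;> subst h
            · exact (mem_contraction_of_one_more hp (hsq f hfL) α
                (hder f hfL _ (by rw [Fin.sum_cons]; omega))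
                (hder f hfL _ (by rw [Fin.sum_cons]; omega))).1
            · exact (mem_contraction_of_one_more hp (hsq f hfL) α
                (hder f hfL _ (by rw [Fin.sum_cons]; omega))
                (hder f hfL _ (by rw [Fin.sum_cons]; omega))).2
          have hIH := IH q'' hq'' L' q' hq'prime hsq' hne' hgcd' hderA
          have hcomap : Ideal.comap (finSuccEquiv K m) P = p := by
            rw [hPdef]; ext x; simp [Ideal.mem_comap]
          have hlt : specMap K m ⟨q', hq'prime⟩ < (⟨p, hp⟩ :
              PrimeSpectrum (MvPolynomial (Fin (m+1)) K)) := by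
            show Ideal.comap (finSuccEquiv K m) (Ideal.map Polynomial.C q') < p
            refine lt_of_le_not_ge ?_ ?_
            · rw [← hcomap]
              exact Ideal.comap_mono Ideal.map_comap_le
            · intro hle
              apply hPB
              intro x hx
              have hx' : (finSuccEquiv K m).symm x ∈ p := by
                rw [← hcomap, Ideal.mem_comap, AlgEquiv.apply_symm_apply]
                exact hx
              have := hle hx'
              rw [Ideal.mem_comap, AlgEquiv.apply_symm_apply] at this
              exact this
          calc ((q'' + 1 : ℕ) : ℕ∞) + 1
              ≤ Order.height (⟨q', hq'prime⟩ :
                PrimeSpectrum (MvPolynomial (Fin m) K)) + 1 := by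
                gcongr
                simpa using hIH
            _ ≤ Order.height (specMap K m ⟨q', hq'prime⟩) + 1 := by
                gcongr
                exact Order.height_le_height_apply_of_strictMono _ specMap_strictMono _
            _ ≤ _ := height_add_one_le_of_lt hlt

lemma keyT {K : Type*} [Field K] : ∀ (n : ℕ) (f : MvPolynomial (Fin n) K), Prime f →
    MvSquareFree f → ∀ (r : ℕ), 2 ≤ r →
    ∀ (p : Ideal (MvPolynomial (Fin n) K)) (hp : p.IsPrime),
    (∀ α : Fin n → ℕ, (∑ i, α i) + 1 ≤ r → iterPDeriv α f ∈ p) →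
    ((r : ℕ∞) + 1) ≤ Order.height (⟨p, hp⟩ : PrimeSpectrum (MvPolynomial (Fin n) K)) := by
  intro n
  induction n with
  | zero =>
      intro f hf _ r hr p hp hder
      exfalso
      rw [MvPolynomial.eq_C_of_isEmpty f] at hf
      rcases eq_or_ne (MvPolynomial.coeff 0 f) 0 with hc | hc
      · rw [hc, map_zero] at hf
        exact hf.ne_zero rfl
      · exact hf.not_unit ((Ne.isUnit hc).map MvPolynomial.C)
  | succ m IH =>
      intro f hf hsqf r hr p hp hder
      obtain ⟨r'', rfl⟩ : ∃ r'', r = r'' + 1 := ⟨r - 1, by omega⟩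
      have hr'' : 1 ≤ r'' := by omega
      set P : Ideal (Polynomial (MvPolynomial (Fin m) K)) :=
        Ideal.comap (finSuccEquiv K m).symm p with hPdef
      have hPprime : P.IsPrime := Ideal.IsPrime.comap _
      set q' : Ideal (MvPolynomial (Fin m) K) := Ideal.comap Polynomial.C P with hq'def
      have hq'prime : q'.IsPrime := Ideal.IsPrime.comap _
      have hcomap : Ideal.comap (finSuccEquiv K m) P = p := by
        rw [hPdef]; ext x; simp [Ideal.mem_comap]
      by_cases hA : (finSuccEquiv K m f).coeff 1 = 0
      · -- `f` does not involve the first variable; recurse with the top lemma itself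
        set b := (finSuccEquiv K m f).coeff 0 with hbdef
        have h2 : finSuccEquiv K m f = Polynomial.C b := by
          rw [eq_C_add_C_X hsqf, hA]; simp [hbdef]
        have hbprime : Prime b := by
          have h1 : Prime (finSuccEquiv K m f) :=
            (MulEquiv.prime_iff (finSuccEquiv K m).toRingEquiv.toMulEquiv).mpr hf
          rw [h2] at h1
          exact Polynomial.prime_C_iff.mp h1
        have hbsq : MvSquareFree b := fun j =>
          le_trans (degreeOf_coeff_finSuccEquiv f j 0) (hsqf j.succ)
        have hderb : ∀ α : Fin m → ℕ, (∑ i, α i) + 1 ≤ r'' + 1 → iterPDeriv α b ∈ q' := by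
          intro α hα
          have h0 : iterPDeriv (Fin.cons 0 α) f ∈ p := by
            apply hder
            rw [Fin.sum_cons]; omega
          have heq := finSuccEquiv_iterPDeriv_cons_zero hsqf α (f := f)
          rw [hA, iterPDeriv_zero_poly] at heq
          simp only [map_zero, zero_mul, add_zero] at heq
          have hmemP : finSuccEquiv K m (iterPDeriv (Fin.cons 0 α) f) ∈ P := by
            simp only [hPdef, Ideal.mem_comap, AlgEquiv.symm_apply_apply]
            exact h0
          rw [heq] at hmemP
          rw [hq'def, Ideal.mem_comap]
          exact hmemP
        have hIH := IH b hbprime hbsq (r'' + 1) (by omega) q' hq'prime hderb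
        have hle : specMap K m ⟨q', hq'prime⟩ ≤ (⟨p, hp⟩ :
            PrimeSpectrum (MvPolynomial (Fin (m+1)) K)) := by
          show Ideal.comap (finSuccEquiv K m) (Ideal.map Polynomial.C q') ≤ p
          rw [← hcomap]
          exact Ideal.comap_mono Ideal.map_comap_le
        calc ((r'' + 1 : ℕ) : ℕ∞) + 1
            ≤ Order.height (⟨q', hq'prime⟩ : PrimeSpectrum (MvPolynomial (Fin m) K)) := hIH
          _ ≤ Order.height (specMap K m ⟨q', hq'prime⟩) :=
              Order.height_le_height_apply_of_strictMono _ specMap_strictMono _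
          _ ≤ _ := Order.height_mono hle
      · -- main case: use `keyE` with the two coefficients of `f`
        set L' : List (MvPolynomial (Fin m) K) :=
          [(finSuccEquiv K m f).coeff 1, (finSuccEquiv K m f).coeff 0] with hL'def
        have hmemL' : ∀ g ∈ L', g = (finSuccEquiv K m f).coeff 1 ∨
            g = (finSuccEquiv K m f).coeff 0 := by
          intro g hg
          simpa [hL'def] using hg
        have hsq' : ∀ g ∈ L', MvSquareFree g := by
          intro g hg
          rcases hmemL' g hg with h | h <;> subst h <;> intro j <;>
            exact le_trans (degreeOf_coeff_finSuccEquiv f j _) (hsqf j.succ)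
        have hne' : ∃ g ∈ L', g ≠ 0 := ⟨_, by simp [hL'def], hA⟩
        have hgcd' : ∀ π : MvPolynomial (Fin m) K, Prime π → ∃ g ∈ L', ¬ π ∣ g := by
          intro π hπ
          by_contra hcon
          push_neg at hcon
          have h1 := hcon _ (by simp [hL'def] : (finSuccEquiv K m f).coeff 1 ∈ L')
          have h0 := hcon _ (by simp [hL'def] : (finSuccEquiv K m f).coeff 0 ∈ L')
          have hdvd := dvd_of_dvd_coeffs hsqf h1 h0
          have hassoc : Associated ((finSuccEquiv K m).symm (Polynomial.C π)) f :=
            (prime_symm_C hπ).associated_of_dvd hf hdvd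
          obtain ⟨u, hu⟩ := hassoc
          have happ : Polynomial.C π * finSuccEquiv K m (u : MvPolynomial (Fin (m+1)) K)
              = finSuccEquiv K m f := by
            have := congrArg (finSuccEquiv K m) hu
            rwa [map_mul, AlgEquiv.apply_symm_apply] at this
          have huu : IsUnit (finSuccEquiv K m (u : MvPolynomial (Fin (m+1)) K)) :=
            u.isUnit.map (finSuccEquiv K m)
          have hc := Polynomial.eq_C_of_natDegree_eq_zero
            (Polynomial.natDegree_eq_zero_of_isUnit huu)
          apply hA
          rw [← happ, hc, ← Polynomial.C_mul]
          simp
        by_cases hPB : P ≤ Ideal.map Polynomial.C q'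
        · have hderB : ∀ g ∈ L', ∀ α : Fin m → ℕ, (∑ i, α i) + 1 ≤ r'' + 1 →
              iterPDeriv α g ∈ q' := by
            intro g hg α hα
            rcases hmemL' g hg with h | h <;> subst h
            · exact (mem_contraction_of_le_mapC hp hsqf α hPB
                (hder _ (by rw [Fin.sum_cons]; omega))).1
            · exact (mem_contraction_of_le_mapC hp hsqf α hPB
                (hder _ (by rw [Fin.sum_cons]; omega))).2
          have hkey := keyE m (r'' + 1) (by omega) L' q' hq'prime hsq' hne' hgcd' hderB
          have hPeq : Ideal.map Polynomial.C q' = P := le_antisymm Ideal.map_comap_le hPB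
          have hspec : specMap K m ⟨q', hq'prime⟩ = ⟨p, hp⟩ := by
            apply PrimeSpectrum.ext
            show Ideal.comap (finSuccEquiv K m) (Ideal.map Polynomial.C q') = p
            rw [hPeq, hPdef]
            ext x
            simp [Ideal.mem_comap]
          calc ((r'' + 1 : ℕ) : ℕ∞) + 1 ≤ Order.height (⟨q', hq'prime⟩ :
                PrimeSpectrum (MvPolynomial (Fin m) K)) := hkey
            _ ≤ Order.height (specMap K m ⟨q', hq'prime⟩) :=
                Order.height_le_height_apply_of_strictMono _ specMap_strictMono _
            _ = _ := by rw [hspec]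
        · have hderA : ∀ g ∈ L', ∀ α : Fin m → ℕ, (∑ i, α i) + 1 ≤ r'' →
              iterPDeriv α g ∈ q' := by
            intro g hg α hα
            rcases hmemL' g hg with h | h <;> subst h
            · exact (mem_contraction_of_one_more hp hsqf α
                (hder _ (by rw [Fin.sum_cons]; omega))
                (hder _ (by rw [Fin.sum_cons]; omega))).1
            · exact (mem_contraction_of_one_more hp hsqf α
                (hder _ (by rw [Fin.sum_cons]; omega))
                (hder _ (by rw [Fin.sum_cons]; omega))).2
          have hkey := keyE m r'' hr'' L' q' hq'prime hsq' hne' hgcd' hderA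
          have hlt : specMap K m ⟨q', hq'prime⟩ < (⟨p, hp⟩ :
              PrimeSpectrum (MvPolynomial (Fin (m+1)) K)) := by
            show Ideal.comap (finSuccEquiv K m) (Ideal.map Polynomial.C q') < p
            refine lt_of_le_not_ge ?_ ?_
            · rw [← hcomap]
              exact Ideal.comap_mono Ideal.map_comap_le
            · intro hle
              apply hPB
              intro x hx
              have hx' : (finSuccEquiv K m).symm x ∈ p := by
                rw [← hcomap, Ideal.mem_comap, AlgEquiv.apply_symm_apply]
                exact hx
              have := hle hx'
              rw [Ideal.mem_comap, AlgEquiv.apply_symm_apply] at this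
              exact this
          calc ((r'' + 1 : ℕ) : ℕ∞) + 1
              ≤ Order.height (⟨q', hq'prime⟩ :
                PrimeSpectrum (MvPolynomial (Fin m) K)) + 1 := by
                gcongr
                simpa using hkey
            _ ≤ Order.height (specMap K m ⟨q', hq'prime⟩) + 1 := by
                gcongr
                exact Order.height_le_height_apply_of_strictMono _ specMap_strictMono _
            _ ≤ _ := height_add_one_le_of_lt hlt


/-- for an irreducible square-free polynomial `f` in `n ≥ 2`
variables and an irreducible closed subset `W` (given by a prime `p` of the
polynomial ring) of codimension `r ≥ 2`, some partial derivative of `f` of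
order at most `r - 1` does not vanish identically on `W`. -/
theorem mult_along_subvariety_le {K : Type*} [Field K] [IsAlgClosed K] [CharZero K]
    {n : ℕ} (hn : 2 ≤ n) (f : MvPolynomial (Fin n) K) (hirr : Irreducible f)
    (hf : MvSquareFree f) (r : ℕ) (hr : 2 ≤ r)
    (p : PrimeSpectrum (MvPolynomial (Fin n) K)) (hht : Order.height p = (r : ℕ∞)) :
    ∃ α : Fin n → ℕ, (∑ i, α i) ≤ r - 1 ∧ iterPDeriv α f ∉ p.asIdeal := by
  by_contra hcon
  push_neg at hcon
  have hprime : Prime f := (UniqueFactorizationMonoid.irreducible_iff_prime).mp hirr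
  have hder : ∀ α : Fin n → ℕ, (∑ i, α i) + 1 ≤ r → iterPDeriv α f ∈ p.asIdeal := by
    intro α hα
    exact hcon α (by omega)
  have hkey := keyT n f hprime hf r hr p.asIdeal p.isPrime hder
  rw [show (⟨p.asIdeal, p.isPrime⟩ : PrimeSpectrum (MvPolynomial (Fin n) K)) = p from rfl,
    hht] at hkey
  have hlt : (r : ℕ∞) < (r : ℕ∞) := (ENat.add_one_le_iff (by simp)).mp hkey
  exact lt_irrefl _ hlt
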